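/- arXiv:1301.4136 — 3 statements merged into one kernel-verified Lean document; each statement's English description precedes it below -/
import Mathlib

section
/- Let X = (x1, …, xn) ∈ (ℤ/12ℤ)ⁿ have n distinct entries, let G ≤ Aff*(ℤ/12ℤ) act componentwise with f{x1, …, xn} ≠ {x1, …, xn} for all f ∈ G with f ≠ id, and let Σn act by coordinate permutation. On the orbit ΣnGX define ρ(νh)(σg·X) := σg(νh)⁻¹·X for ν, σ ∈ Σn and h, g ∈ G. Then the group ρ(ΣnG) ≤ Sym(ΣnGX) is the internal direct product of its subgroups ρ(Σn) and ρ(G). -/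
/-- The coordinate-permuting action of `Σn` on `n`-tuples in `ℤ/12ℤ`. -/
def pact {n : ℕ} (σ : Equiv.Perm (Fin n)) (y : Fin n → ZMod 12) : Fin n → ZMod 12 :=
  fun i => y (σ⁻¹ i)

/-- The componentwise action of a bijection of `ℤ/12ℤ` on `n`-tuples. -/
def gact {n : ℕ} (f : Equiv.Perm (ZMod 12)) (y : Fin n → ZMod 12) : Fin n → ZMod 12 :=
  fun i => f (y i)

/-- The orbit `ΣnGX` of `X` under coordinate permutations and the componentwise
action of `G`. -/
def bigOrbit {n : ℕ} (X : Fin n → ZMod 12) (G : Subgroup (Equiv.Perm (ZMod 12))) :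
    Set (Fin n → ZMod 12) :=
  {W | ∃ σ : Equiv.Perm (Fin n), ∃ f ∈ G, pact σ (gact f X) = W}

/-- With `ρ(νh)` the dual operation on the orbit `ΣnGX` characterized by
`ρ(νh)(σg·X) = σg(νh)⁻¹·X`, the group `ρ(ΣnG) = {ρ(νh) : ν ∈ Σn, h ∈ G}` is the internal
direct product of `ρ(Σn) = {ρ(ν·1)}` and `ρ(G) = {ρ(1·h) : h ∈ G}`: these commute
elementwise, intersect trivially, and every element of `ρ(ΣnG)` is a product of one
element of each. -/
theorem stmt14 {n : ℕ} (X : Fin n → ZMod 12) (hX : Function.Injective X)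
    (G : Subgroup (Equiv.Perm (ZMod 12)))
    (hGaff : ∀ f ∈ G, ∃ a b : ZMod 12, IsUnit a ∧ ∀ x : ZMod 12, f x = a * x + b)
    (hGsym : ∀ f ∈ G, f ≠ 1 → (⇑f) '' Set.range X ≠ Set.range X)
    (ρ : Equiv.Perm (Fin n) → Equiv.Perm (ZMod 12) → Equiv.Perm ↥(bigOrbit X G))
    (hρ : ∀ (ν : Equiv.Perm (Fin n)) (h : Equiv.Perm (ZMod 12)), h ∈ G →
      ∀ (σ : Equiv.Perm (Fin n)) (f : Equiv.Perm (ZMod 12)), f ∈ G →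
      ∀ Y : ↥(bigOrbit X G), (Y : Fin n → ZMod 12) = pact σ (gact f X) →
        ((ρ ν h Y : Fin n → ZMod 12) = pact (σ * ν⁻¹) (gact (f * h⁻¹) X))) :
    (∀ p ∈ {p : Equiv.Perm ↥(bigOrbit X G) | ∃ ν : Equiv.Perm (Fin n), p = ρ ν 1},
      ∀ q ∈ {p : Equiv.Perm ↥(bigOrbit X G) | ∃ h ∈ G, p = ρ 1 h},
        p * q = q * p) ∧
    ({p : Equiv.Perm ↥(bigOrbit X G) | ∃ ν : Equiv.Perm (Fin n), p = ρ ν 1} ∩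
      {p : Equiv.Perm ↥(bigOrbit X G) | ∃ h ∈ G, p = ρ 1 h} = {1}) ∧
    (∀ p ∈ {p : Equiv.Perm ↥(bigOrbit X G) | ∃ ν : Equiv.Perm (Fin n), ∃ h ∈ G, p = ρ ν h},
      ∃ a ∈ {p : Equiv.Perm ↥(bigOrbit X G) | ∃ ν : Equiv.Perm (Fin n), p = ρ ν 1},
        ∃ b ∈ {p : Equiv.Perm ↥(bigOrbit X G) | ∃ h ∈ G, p = ρ 1 h},
          p = a * b) := by
  have hXrep : X = pact 1 (gact 1 X) := by
    funext i; simp [pact, gact]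
  have hXmem : X ∈ bigOrbit X G := ⟨1, 1, G.one_mem, hXrep.symm⟩
  have hid : ρ 1 1 = 1 := by
    apply Equiv.ext; intro Y
    obtain ⟨σ, f, hf, hY⟩ := Y.2
    have h1 := hρ 1 1 G.one_mem σ f hf Y hY.symm
    apply Subtype.ext
    simpa [hY] using h1
  refine ⟨?_, ?_, ?_⟩
  · rintro p ⟨ν, rfl⟩ q ⟨h, hh, rfl⟩
    apply Equiv.ext; intro Y
    obtain ⟨σ, f, hf, hY⟩ := Y.2
    have h1 := hρ 1 h hh σ f hf Y hY.symm
    have h2 := hρ ν 1 G.one_mem σ f hf Y hY.symm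
    have h3 := hρ ν 1 G.one_mem (σ * 1⁻¹) (f * h⁻¹) (G.mul_mem hf (G.inv_mem hh))
      (ρ 1 h Y) h1
    have h4 := hρ 1 h hh (σ * ν⁻¹) (f * 1⁻¹) (by simpa using hf) (ρ ν 1 Y) h2
    apply Subtype.ext
    simp only [Equiv.Perm.mul_apply]
    rw [h3, h4]
    simp [mul_one, inv_one]
  · ext p
    simp only [Set.mem_inter_iff, Set.mem_setOf_eq, Set.mem_singleton_iff]
    constructor
    · rintro ⟨⟨ν, rfl⟩, ⟨h, hh, hph⟩⟩
      set XX : ↥(bigOrbit X G) := ⟨X, hXmem⟩ with hXX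
      have h1 := hρ ν 1 G.one_mem 1 1 G.one_mem XX hXrep
      have h2 := hρ 1 h hh 1 1 G.one_mem XX hXrep
      rw [← hph] at h2
      have heq : pact (1 * ν⁻¹) (gact (1 * 1⁻¹) X) = pact (1 * 1⁻¹) (gact (1 * h⁻¹) X) :=
        h1.symm.trans h2
      have hfun : ∀ i, X (ν i) = h⁻¹ (X i) := by
        intro i
        have := congrFun heq i
        simpa [pact, gact] using this
      have hrange : (⇑h⁻¹) '' Set.range X = Set.range X := by
        ext x
        constructor
        · rintro ⟨y, ⟨i, rfl⟩, rfl⟩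
          exact ⟨ν i, hfun i⟩
        · rintro ⟨i, rfl⟩
          refine ⟨X (ν⁻¹ i), ⟨ν⁻¹ i, rfl⟩, ?_⟩
          have := hfun (ν⁻¹ i)
          simp only [← Equiv.Perm.mul_apply, mul_inv_cancel, Equiv.Perm.one_apply] at this
          exact this.symm
      have hh1 : h = 1 := by
        by_contra hne
        have : h⁻¹ ≠ 1 := fun hc => hne (by simpa using congrArg Inv.inv hc)
        exact hGsym h⁻¹ (G.inv_mem hh) this hrange
      have hν1 : ν = 1 := by
        apply Equiv.ext; intro i
        have := hfun i
        rw [hh1] at this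
        simp at this
        simpa using hX this
      rw [hν1, hid]
    · rintro rfl
      exact ⟨⟨1, hid.symm⟩, ⟨1, G.one_mem, hid.symm⟩⟩
  · rintro p ⟨ν, h, hh, rfl⟩
    refine ⟨ρ ν 1, ⟨ν, rfl⟩, ρ 1 h, ⟨h, hh, rfl⟩, ?_⟩
    apply Equiv.ext; intro Y
    obtain ⟨σ, f, hf, hY⟩ := Y.2
    have h1 := hρ 1 h hh σ f hf Y hY.symm
    have h2 := hρ ν 1 G.one_mem (σ * 1⁻¹) (f * h⁻¹) (G.mul_mem hf (G.inv_mem hh))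
      (ρ 1 h Y) h1
    have h0 := hρ ν h hh σ f hf Y hY.symm
    apply Subtype.ext
    simp only [Equiv.Perm.mul_apply]
    rw [h0, h2]
    simp [mul_one, inv_one]
end

section
/- Let X = (x1, …, xn) ∈ (ℤ/12ℤ)ⁿ have n distinct entries, let G ≤ Aff*(ℤ/12ℤ) act componentwise with f{x1, …, xn} ≠ {x1, …, xn} for all f ∈ G with f ≠ id, and let Σn act by coordinate permutation. Let λ(ΣnG) ≤ Sym(ΣnGX) be the image of the action of the internal direct product ΣnG on the orbit ΣnGX, and let ρ(ΣnG) be defined by ρ(νh)(σg·X) := σg(νh)⁻¹·X. Then λ(ΣnG) and ρ(ΣnG) are dual groups in Sym(ΣnGX): both act simply transitively on ΣnGX and each is the centralizer of the other. -/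
/-- Uniqueness of the representation of elements of the orbit. -/
lemma pact_gact_inj {n : ℕ} (X : Fin n → ZMod 12) (hX : Function.Injective X)
    (G : Subgroup (Equiv.Perm (ZMod 12)))
    (hGsym : ∀ f ∈ G, f ≠ 1 → (⇑f) '' Set.range X ≠ Set.range X)
    {σ σ' : Equiv.Perm (Fin n)} {f f' : Equiv.Perm (ZMod 12)}
    (hf : f ∈ G) (hf' : f' ∈ G)
    (h : pact σ (gact f X) = pact σ' (gact f' X)) : σ = σ' ∧ f = f' := by
  have hpt : ∀ i, f (X (σ⁻¹ i)) = f' (X (σ'⁻¹ i)) := fun i => congrFun h i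
  have hk : ∀ i, (f'⁻¹ * f) (X (σ⁻¹ i)) = X (σ'⁻¹ i) := by
    intro i
    rw [Equiv.Perm.mul_apply, hpt i]
    exact f'.symm_apply_apply _
  have himg : (⇑(f'⁻¹ * f)) '' Set.range X = Set.range X := by
    ext y
    constructor
    · rintro ⟨-, ⟨j, rfl⟩, rfl⟩
      have : X j = X (σ⁻¹ (σ j)) := by simp
      rw [this, hk (σ j)]
      exact ⟨σ'⁻¹ (σ j), rfl⟩
    · rintro ⟨j, rfl⟩
      refine ⟨X (σ⁻¹ (σ' j)), ⟨σ⁻¹ (σ' j), rfl⟩, ?_⟩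
      rw [hk (σ' j)]; simp
  have hff : f = f' := by
    by_contra hne
    refine hGsym (f'⁻¹ * f) (mul_mem (inv_mem hf') hf) ?_ himg
    intro h1
    rw [inv_mul_eq_one] at h1
    exact hne h1.symm
  subst hff
  have hσi : ∀ i, σ⁻¹ i = σ'⁻¹ i := fun i => hX (f.injective (hpt i))
  refine ⟨?_, rfl⟩
  have : σ⁻¹ = σ'⁻¹ := Equiv.ext hσi
  simpa using congrArg Inv.inv this

/-- With `λ(νh)(σg·X) = (νh)σg·X = (νσ)(hf)·X` the image of the action of
the internal direct product `ΣnG` on the orbit `ΣnGX`, and `ρ(νh)(σg·X) = σg(νh)⁻¹·X`,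
the groups `λ(ΣnG)` and `ρ(ΣnG)` are dual in `Sym(ΣnGX)`: both act simply transitively
on `ΣnGX` and each is the centralizer of the other. -/
theorem stmt16 {n : ℕ} (X : Fin n → ZMod 12) (hX : Function.Injective X)
    (G : Subgroup (Equiv.Perm (ZMod 12)))
    (hGaff : ∀ f ∈ G, ∃ a b : ZMod 12, IsUnit a ∧ ∀ x : ZMod 12, f x = a * x + b)
    (hGsym : ∀ f ∈ G, f ≠ 1 → (⇑f) '' Set.range X ≠ Set.range X)
    (lam ρ : Equiv.Perm (Fin n) → Equiv.Perm (ZMod 12) → Equiv.Perm ↥(bigOrbit X G))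
    (hlam : ∀ (ν : Equiv.Perm (Fin n)) (h : Equiv.Perm (ZMod 12)), h ∈ G →
      ∀ (σ : Equiv.Perm (Fin n)) (f : Equiv.Perm (ZMod 12)), f ∈ G →
      ∀ Y : ↥(bigOrbit X G), (Y : Fin n → ZMod 12) = pact σ (gact f X) →
        ((lam ν h Y : Fin n → ZMod 12) = pact (ν * σ) (gact (h * f) X)))
    (hρ : ∀ (ν : Equiv.Perm (Fin n)) (h : Equiv.Perm (ZMod 12)), h ∈ G →
      ∀ (σ : Equiv.Perm (Fin n)) (f : Equiv.Perm (ZMod 12)), f ∈ G →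
      ∀ Y : ↥(bigOrbit X G), (Y : Fin n → ZMod 12) = pact σ (gact f X) →
        ((ρ ν h Y : Fin n → ZMod 12) = pact (σ * ν⁻¹) (gact (f * h⁻¹) X))) :
    (∀ Y Z : ↥(bigOrbit X G), ∃! p : Equiv.Perm ↥(bigOrbit X G),
        p ∈ {p | ∃ ν : Equiv.Perm (Fin n), ∃ h ∈ G, p = lam ν h} ∧ p Y = Z) ∧
    (∀ Y Z : ↥(bigOrbit X G), ∃! p : Equiv.Perm ↥(bigOrbit X G),
        p ∈ {p | ∃ ν : Equiv.Perm (Fin n), ∃ h ∈ G, p = ρ ν h} ∧ p Y = Z) ∧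
    ((Subgroup.centralizer {p : Equiv.Perm ↥(bigOrbit X G) |
          ∃ ν : Equiv.Perm (Fin n), ∃ h ∈ G, p = lam ν h} : Set (Equiv.Perm ↥(bigOrbit X G)))
        = {p | ∃ ν : Equiv.Perm (Fin n), ∃ h ∈ G, p = ρ ν h}) ∧
    ((Subgroup.centralizer {p : Equiv.Perm ↥(bigOrbit X G) |
          ∃ ν : Equiv.Perm (Fin n), ∃ h ∈ G, p = ρ ν h} : Set (Equiv.Perm ↥(bigOrbit X G)))
        = {p | ∃ ν : Equiv.Perm (Fin n), ∃ h ∈ G, p = lam ν h}) := by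
  classical
  have uniq := fun {σ σ' : Equiv.Perm (Fin n)} {f f' : Equiv.Perm (ZMod 12)}
      (hf : f ∈ G) (hf' : f' ∈ G) h =>
    pact_gact_inj X hX G hGsym (σ := σ) (σ' := σ') hf hf' h
  -- the base point
  have hX0coe : X = pact (1 : Equiv.Perm (Fin n)) (gact 1 X) := by
    funext i; simp [pact, gact]
  have hX0mem : X ∈ bigOrbit X G := ⟨1, 1, one_mem G, hX0coe.symm⟩
  set X0 : ↥(bigOrbit X G) := ⟨X, hX0mem⟩ with hX0def
  have hX0 : (X0 : Fin n → ZMod 12) = pact 1 (gact 1 X) := hX0coe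
  -- commutation of lam and ρ
  have comm : ∀ (ν : Equiv.Perm (Fin n)) (h : Equiv.Perm (ZMod 12)), h ∈ G →
      ∀ (ν' : Equiv.Perm (Fin n)) (h' : Equiv.Perm (ZMod 12)), h' ∈ G →
      lam ν' h' * ρ ν h = ρ ν h * lam ν' h' := by
    intro ν h hh ν' h' hh'
    apply Equiv.ext
    intro Y
    obtain ⟨σ, f, hf, hY⟩ := Y.2
    have h1 : ((ρ ν h Y : Fin n → ZMod 12)) = pact (σ * ν⁻¹) (gact (f * h⁻¹) X) :=
      hρ ν h hh σ f hf Y hY.symm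
    have h2 : ((lam ν' h' (ρ ν h Y) : Fin n → ZMod 12))
        = pact (ν' * (σ * ν⁻¹)) (gact (h' * (f * h⁻¹)) X) :=
      hlam ν' h' hh' _ _ (mul_mem hf (inv_mem hh)) _ h1
    have h3 : ((lam ν' h' Y : Fin n → ZMod 12)) = pact (ν' * σ) (gact (h' * f) X) :=
      hlam ν' h' hh' σ f hf Y hY.symm
    have h4 : ((ρ ν h (lam ν' h' Y) : Fin n → ZMod 12))
        = pact ((ν' * σ) * ν⁻¹) (gact ((h' * f) * h⁻¹) X) :=
      hρ ν h hh _ _ (mul_mem hh' hf) _ h3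
    rw [Equiv.Perm.mul_apply, Equiv.Perm.mul_apply]
    apply Subtype.ext
    rw [h2, h4, mul_assoc, mul_assoc]
  refine ⟨?_, ?_, ?_, ?_⟩
  · -- λ simply transitive
    intro Y Z
    obtain ⟨σ, f, hf, hY⟩ := Y.2
    obtain ⟨σ', f', hf', hZ⟩ := Z.2
    refine ⟨lam (σ' * σ⁻¹) (f' * f⁻¹), ⟨⟨_, _, mul_mem hf' (inv_mem hf), rfl⟩, ?_⟩, ?_⟩
    · apply Subtype.ext
      rw [hlam _ _ (mul_mem hf' (inv_mem hf)) σ f hf Y hY.symm, ← hZ,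
        inv_mul_cancel_right, inv_mul_cancel_right]
    · rintro p ⟨⟨ν, h, hh, rfl⟩, hp⟩
      have hcoe : (lam ν h Y : Fin n → ZMod 12) = pact (ν * σ) (gact (h * f) X) :=
        hlam ν h hh σ f hf Y hY.symm
      have heq : pact (ν * σ) (gact (h * f) X) = pact σ' (gact f' X) := by
        rw [← hcoe, hp, ← hZ]
      obtain ⟨e1, e2⟩ := uniq (mul_mem hh hf) hf' heq
      have hν : ν = σ' * σ⁻¹ := by rw [← e1]; group
      have hh2 : h = f' * f⁻¹ := by rw [← e2]; group
      rw [hν, hh2]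
  · -- ρ simply transitive
    intro Y Z
    obtain ⟨σ, f, hf, hY⟩ := Y.2
    obtain ⟨σ', f', hf', hZ⟩ := Z.2
    refine ⟨ρ (σ'⁻¹ * σ) (f'⁻¹ * f), ⟨⟨_, _, mul_mem (inv_mem hf') hf, rfl⟩, ?_⟩, ?_⟩
    · apply Subtype.ext
      rw [hρ _ _ (mul_mem (inv_mem hf') hf) σ f hf Y hY.symm, ← hZ]
      have e1 : σ * (σ'⁻¹ * σ)⁻¹ = σ' := by group
      have e2 : f * (f'⁻¹ * f)⁻¹ = f' := by group
      rw [e1, e2]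
    · rintro p ⟨⟨ν, h, hh, rfl⟩, hp⟩
      have hcoe : (ρ ν h Y : Fin n → ZMod 12) = pact (σ * ν⁻¹) (gact (f * h⁻¹) X) :=
        hρ ν h hh σ f hf Y hY.symm
      have heq : pact (σ * ν⁻¹) (gact (f * h⁻¹) X) = pact σ' (gact f' X) := by
        rw [← hcoe, hp, ← hZ]
      obtain ⟨e1, e2⟩ := uniq (mul_mem hf (inv_mem hh)) hf' heq
      have hν : ν = σ'⁻¹ * σ := by rw [← e1]; group
      have hh2 : h = f'⁻¹ * f := by rw [← e2]; group
      rw [hν, hh2]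
  · -- centralizer of λ = ρ
    ext p
    simp only [SetLike.mem_coe, Subgroup.mem_centralizer_iff, Set.mem_setOf_eq]
    constructor
    · intro hp
      obtain ⟨σ₀, f₀, hf₀, h0⟩ := (p X0).2
      refine ⟨σ₀⁻¹, f₀⁻¹, inv_mem hf₀, ?_⟩
      apply Equiv.ext
      intro Y
      obtain ⟨σ, f, hf, hY⟩ := Y.2
      have hYlam : lam σ f X0 = Y := by
        apply Subtype.ext
        rw [hlam σ f hf 1 1 (one_mem G) X0 hX0, mul_one, mul_one, hY]
      have hcommu := hp (lam σ f) ⟨σ, f, hf, rfl⟩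
      have hswap : lam σ f (p X0) = p (lam σ f X0) := by
        have := congrArg (fun q : Equiv.Perm ↥(bigOrbit X G) => q X0) hcommu
        simpa [Equiv.Perm.mul_apply] using this
      have hpY : p Y = lam σ f (p X0) := by rw [← hYlam, hswap]
      apply Subtype.ext
      rw [hpY, hlam σ f hf σ₀ f₀ hf₀ (p X0) h0.symm,
        hρ σ₀⁻¹ f₀⁻¹ (inv_mem hf₀) σ f hf Y hY.symm, inv_inv, inv_inv]
    · rintro ⟨ν, h, hh, rfl⟩
      rintro q ⟨ν', h', hh', rfl⟩
      exact comm ν h hh ν' h' hh'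
  · -- centralizer of ρ = λ
    ext p
    simp only [SetLike.mem_coe, Subgroup.mem_centralizer_iff, Set.mem_setOf_eq]
    constructor
    · intro hp
      obtain ⟨σ₀, f₀, hf₀, h0⟩ := (p X0).2
      refine ⟨σ₀, f₀, hf₀, ?_⟩
      apply Equiv.ext
      intro Y
      obtain ⟨σ, f, hf, hY⟩ := Y.2
      have hYρ : ρ σ⁻¹ f⁻¹ X0 = Y := by
        apply Subtype.ext
        rw [hρ σ⁻¹ f⁻¹ (inv_mem hf) 1 1 (one_mem G) X0 hX0, inv_inv, inv_inv,
          one_mul, one_mul, hY]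
      have hcommu := hp (ρ σ⁻¹ f⁻¹) ⟨σ⁻¹, f⁻¹, inv_mem hf, rfl⟩
      have hswap : ρ σ⁻¹ f⁻¹ (p X0) = p (ρ σ⁻¹ f⁻¹ X0) := by
        have := congrArg (fun q : Equiv.Perm ↥(bigOrbit X G) => q X0) hcommu
        simpa [Equiv.Perm.mul_apply] using this
      have hpY : p Y = ρ σ⁻¹ f⁻¹ (p X0) := by rw [← hYρ, ← hswap]
      apply Subtype.ext
      rw [hpY, hρ σ⁻¹ f⁻¹ (inv_mem hf) σ₀ f₀ hf₀ (p X0) h0.symm,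
        hlam σ₀ f₀ hf₀ σ f hf Y hY.symm, inv_inv, inv_inv]
    · rintro ⟨ν, h, hh, rfl⟩
      rintro q ⟨ν', h', hh', rfl⟩
      exact (comm ν' h' hh' ν h hh).symm
end

section
/- Let S be the set of 24 triples in (ℤ/12ℤ)³ of the form T_j(0,4,7) and I_j(0,4,7) for j ∈ ℤ/12ℤ, where T_j and I_j act componentwise. Define P, L, R : S → S by P(y1,y2,y3) = I_{y1+y3}(y1,y2,y3), L(y1,y2,y3) = I_{y2+y3}(y1,y2,y3), R(y1,y2,y3) = I_{y1+y2}(y1,y2,y3). Then the subgroup of Sym(S) generated by P, L, R (the PLR-group) and the image of the T/I-group in Sym(S) are dual groups: both act simply transitively on S and each is the centralizer of the other in Sym(S). -/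
/-- The set `S` of the 24 consonant-triad pitch-class segments: all componentwise
transpositions `T_j(0,4,7)` and inversions `I_j(0,4,7)`, where `T_j(k) = k + j` and
`I_j(k) = -k + j`. -/
def consSet : Set (Fin 3 → ZMod 12) :=
  {Y | (∃ j : ZMod 12, Y = fun i => ![0, 4, 7] i + j) ∨
       (∃ j : ZMod 12, Y = fun i => -(![0, 4, 7] i) + j)}

namespace Stmt17

abbrev S : Type := ↥consSet

def TIset : Set (Equiv.Perm S) :=
  {p : Equiv.Perm S |
    (∃ j : ZMod 12, ∀ W : S, (p W : Fin 3 → ZMod 12) = fun i => (W : Fin 3 → ZMod 12) i + j) ∨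
    (∃ j : ZMod 12, ∀ W : S, (p W : Fin 3 → ZMod 12) = fun i => -((W : Fin 3 → ZMod 12) i) + j)}

def Tel (j : ZMod 12) : S := ⟨fun i => ![0, 4, 7] i + j, Or.inl ⟨j, rfl⟩⟩
def Iel (j : ZMod 12) : S := ⟨fun i => -(![0, 4, 7] i) + j, Or.inr ⟨j, rfl⟩⟩

lemma consCases (Y : S) : (∃ a, Y = Tel a) ∨ (∃ a, Y = Iel a) := by
  rcases Y.2 with ⟨j, hj⟩ | ⟨j, hj⟩
  · exact Or.inl ⟨j, Subtype.ext hj⟩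
  · exact Or.inr ⟨j, Subtype.ext hj⟩

lemma shiftMem {Y : Fin 3 → ZMod 12} (h : Y ∈ consSet) (j : ZMod 12) :
    (fun i => Y i + j) ∈ consSet := by
  rcases h with ⟨k, hk⟩ | ⟨k, hk⟩
  · exact Or.inl ⟨k + j, by subst hk; funext i; dsimp; ring⟩
  · exact Or.inr ⟨k + j, by subst hk; funext i; dsimp; ring⟩

lemma negMem {Y : Fin 3 → ZMod 12} (h : Y ∈ consSet) (j : ZMod 12) :
    (fun i => -(Y i) + j) ∈ consSet := by
  rcases h with ⟨k, hk⟩ | ⟨k, hk⟩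
  · exact Or.inr ⟨j - k, by subst hk; funext i; dsimp; ring⟩
  · exact Or.inl ⟨j - k, by subst hk; funext i; dsimp; ring⟩

def tperm (j : ZMod 12) : Equiv.Perm S where
  toFun Y := ⟨fun i => (Y : Fin 3 → ZMod 12) i + j, shiftMem Y.2 j⟩
  invFun Y := ⟨fun i => (Y : Fin 3 → ZMod 12) i + (-j), shiftMem Y.2 (-j)⟩
  left_inv Y := Subtype.ext (by funext i; dsimp; ring)
  right_inv Y := Subtype.ext (by funext i; dsimp; ring)

def ipermAux (j : ZMod 12) : S → S :=
  fun Y => ⟨fun i => -((Y : Fin 3 → ZMod 12) i) + j, negMem Y.2 j⟩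

lemma ipermAux_invol (j : ZMod 12) : Function.Involutive (ipermAux j) :=
  fun Y => Subtype.ext (by funext i; simp [ipermAux])

def iperm (j : ZMod 12) : Equiv.Perm S := (ipermAux_invol j).toPerm

lemma tperm_mem (j : ZMod 12) : tperm j ∈ TIset := Or.inl ⟨j, fun _ => rfl⟩
lemma iperm_mem (j : ZMod 12) : iperm j ∈ TIset := Or.inr ⟨j, fun _ => rfl⟩

lemma tperm_Tel (j a : ZMod 12) : tperm j (Tel a) = Tel (a + j) :=
  Subtype.ext (by funext i; show ![0,4,7] i + a + j = ![0,4,7] i + (a + j); ring)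
lemma tperm_Iel (j a : ZMod 12) : tperm j (Iel a) = Iel (a + j) :=
  Subtype.ext (by funext i; show -(![0,4,7] i) + a + j = -(![0,4,7] i) + (a + j); ring)
lemma iperm_Tel (j a : ZMod 12) : iperm j (Tel a) = Iel (j - a) :=
  Subtype.ext (by funext i; show -(![0,4,7] i + a) + j = -(![0,4,7] i) + (j - a); ring)
lemma iperm_Iel (j a : ZMod 12) : iperm j (Iel a) = Tel (j - a) :=
  Subtype.ext (by funext i; show -(-(![0,4,7] i) + a) + j = ![0,4,7] i + (j - a); ring)

lemma TIreach (Y Z : S) : ∃ p, p ∈ TIset ∧ p Y = Z := by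
  rcases consCases Y with ⟨a, rfl⟩ | ⟨a, rfl⟩ <;> rcases consCases Z with ⟨b, rfl⟩ | ⟨b, rfl⟩
  · exact ⟨tperm (b - a), tperm_mem _, by rw [tperm_Tel]; congr 1; ring⟩
  · exact ⟨iperm (b + a), iperm_mem _, by rw [iperm_Tel]; congr 1; ring⟩
  · exact ⟨iperm (b + a), iperm_mem _, by rw [iperm_Iel]; congr 1; ring⟩
  · exact ⟨tperm (b - a), tperm_mem _, by rw [tperm_Iel]; congr 1; ring⟩

lemma key_comm (c p : Equiv.Perm S) (a b : Fin 3)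
    (hc : ∀ W : S, (c W : Fin 3 → ZMod 12) =
      fun i => -((W : Fin 3 → ZMod 12) i) + ((W : Fin 3 → ZMod 12) a + (W : Fin 3 → ZMod 12) b))
    (hp : p ∈ TIset) : p * c = c * p := by
  rcases hp with ⟨j, hj⟩ | ⟨j, hj⟩ <;>
  · apply Equiv.ext; intro W
    apply Subtype.ext
    show ((p (c W) : Fin 3 → ZMod 12)) = ((c (p W) : Fin 3 → ZMod 12))
    rw [hj (c W), hc W, hc (p W), hj W]
    funext i; dsimp; ring


section PLR

variable {P L R : Equiv.Perm S}

def hPt (P : Equiv.Perm S) : Prop := ∀ Y : S, (P Y : Fin 3 → ZMod 12) =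
      fun i => -((Y : Fin 3 → ZMod 12) i) + ((Y : Fin 3 → ZMod 12) 0 + (Y : Fin 3 → ZMod 12) 2)
def hLt (L : Equiv.Perm S) : Prop := ∀ Y : S, (L Y : Fin 3 → ZMod 12) =
      fun i => -((Y : Fin 3 → ZMod 12) i) + ((Y : Fin 3 → ZMod 12) 1 + (Y : Fin 3 → ZMod 12) 2)
def hRt (R : Equiv.Perm S) : Prop := ∀ Y : S, (R Y : Fin 3 → ZMod 12) =
      fun i => -((Y : Fin 3 → ZMod 12) i) + ((Y : Fin 3 → ZMod 12) 0 + (Y : Fin 3 → ZMod 12) 1)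

lemma R_Tel (hR : hRt R) (a : ZMod 12) : R (Tel a) = Iel (a + 4) := by
  apply Subtype.ext
  rw [hR (Tel a)]
  funext i
  show -(![0,4,7] i + a) + ((![0,4,7] 0 + a) + (![0,4,7] 1 + a)) = -(![0,4,7] i) + (a + 4)
  norm_num [Matrix.cons_val_zero, Matrix.cons_val_one, Matrix.head_cons]
  ring

lemma R_Iel (hR : hRt R) (a : ZMod 12) : R (Iel a) = Tel (a - 4) := by
  apply Subtype.ext
  rw [hR (Iel a)]
  funext i
  show -(-(![0,4,7] i) + a) + ((-(![0,4,7] 0) + a) + (-(![0,4,7] 1) + a)) = ![0,4,7] i + (a - 4)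
  norm_num [Matrix.cons_val_zero, Matrix.cons_val_one, Matrix.head_cons]
  ring

lemma L_Tel (hL : hLt L) (a : ZMod 12) : L (Tel a) = Iel (a + 11) := by
  apply Subtype.ext
  rw [hL (Tel a)]
  funext i
  show -(![0,4,7] i + a) + ((![0,4,7] 1 + a) + (![0,4,7] 2 + a)) = -(![0,4,7] i) + (a + 11)
  norm_num [Matrix.cons_val_one, Matrix.head_cons, Matrix.cons_val_two, Matrix.tail_cons]
  ring

lemma L_Iel (hL : hLt L) (a : ZMod 12) : L (Iel a) = Tel (a - 11) := by
  apply Subtype.ext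
  rw [hL (Iel a)]
  funext i
  show -(-(![0,4,7] i) + a) + ((-(![0,4,7] 1) + a) + (-(![0,4,7] 2) + a)) = ![0,4,7] i + (a - 11)
  norm_num [Matrix.cons_val_one, Matrix.head_cons, Matrix.cons_val_two, Matrix.tail_cons]
  ring

lemma LR_Tel (hL : hLt L) (hR : hRt R) (a : ZMod 12) : (L * R) (Tel a) = Tel (a + 5) := by
  rw [Equiv.Perm.mul_apply, R_Tel hR, L_Iel hL, add_sub_assoc,
    show (4 - 11 : ZMod 12) = 5 from by decide]

lemma LR_Iel (hL : hLt L) (hR : hRt R) (a : ZMod 12) : (L * R) (Iel a) = Iel (a + 7) := by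
  rw [Equiv.Perm.mul_apply, R_Iel hR, L_Tel hL]
  congr 1; ring

lemma LR_pow (hL : hLt L) (hR : hRt R) (n : ℕ) : ((L * R) ^ n) (Tel 0) = Tel (5 * n) := by
  induction n with
  | zero => simp [Equiv.Perm.one_apply]
  | succ n ih =>
    rw [pow_succ', Equiv.Perm.mul_apply, ih, LR_Tel hL hR]
    congr 1; push_cast; ring


lemma L_memC : L ∈ Subgroup.closure {P, L, R} :=
  Subgroup.subset_closure (by simp)

lemma R_memC : R ∈ Subgroup.closure {P, L, R} :=
  Subgroup.subset_closure (by simp)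

lemma Creach0 (hL : hLt L) (hR : hRt R) (Y : S) :
    ∃ c ∈ Subgroup.closure {P, L, R}, c (Tel 0) = Y := by
  have hg : (L * R) ∈ Subgroup.closure {P, L, R} :=
    Subgroup.mul_mem _ L_memC R_memC
  rcases consCases Y with ⟨a, rfl⟩ | ⟨a, rfl⟩
  · refine ⟨(L * R) ^ (5 * a).val, Subgroup.pow_mem _ hg _, ?_⟩
    rw [LR_pow hL hR]
    congr 1
    rw [ZMod.natCast_val, ZMod.cast_id]
    rw [show (5 : ZMod 12) * (5 * a) = 25 * a from by ring,
      show (25 : ZMod 12) = 1 from by decide, one_mul]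
  · refine ⟨R * (L * R) ^ (5 * (a - 4)).val,
      Subgroup.mul_mem _ R_memC (Subgroup.pow_mem _ hg _), ?_⟩
    rw [Equiv.Perm.mul_apply, LR_pow hL hR]
    rw [show ((5 * ((5 * (a - 4)).val : ℕ) : ZMod 12)) = a - 4 from by
      rw [ZMod.natCast_val, ZMod.cast_id,
        show (5 : ZMod 12) * (5 * (a - 4)) = 25 * (a - 4) from by ring,
        show (25 : ZMod 12) = 1 from by decide, one_mul]]
    rw [R_Tel hR]
    congr 1; ring

lemma Creach (hL : hLt L) (hR : hRt R) (Y Z : S) :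
    ∃ c ∈ Subgroup.closure {P, L, R}, c Y = Z := by
  obtain ⟨c1, hc1, e1⟩ := Creach0 (P := P) hL hR Y
  obtain ⟨c2, hc2, e2⟩ := Creach0 (P := P) hL hR Z
  refine ⟨c2 * c1⁻¹, Subgroup.mul_mem _ hc2 (Subgroup.inv_mem _ hc1), ?_⟩
  rw [← e1, ← e2]
  simp [Equiv.Perm.mul_apply]

lemma closure_le_centTI (hP : hPt P) (hL : hLt L) (hR : hRt R) :
    Subgroup.closure {P, L, R} ≤ Subgroup.centralizer TIset := by
  rw [Subgroup.closure_le]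
  rintro c (rfl | rfl | rfl) <;> rw [SetLike.mem_coe, Subgroup.mem_centralizer_iff] <;>
    intro p hp
  · exact key_comm _ _ 0 2 hP hp
  · exact key_comm _ _ 1 2 hL hp
  · exact key_comm _ _ 0 1 hR hp

lemma TI_le_centC (hP : hPt P) (hL : hLt L) (hR : hRt R) {p : Equiv.Perm S}
    (hp : p ∈ TIset) :
    p ∈ Subgroup.centralizer ((Subgroup.closure {P, L, R} : Subgroup (Equiv.Perm S)) :
      Set (Equiv.Perm S)) := by
  rw [Subgroup.mem_centralizer_iff]
  intro g hg
  have hle : Subgroup.closure {P, L, R} ≤ Subgroup.centralizer {p} := by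
    rw [Subgroup.closure_le]
    rintro c (rfl | rfl | rfl) <;> rw [SetLike.mem_coe, Subgroup.mem_centralizer_iff] <;>
      rintro q rfl
    · exact key_comm _ _ 0 2 hP hp
    · exact key_comm _ _ 1 2 hL hp
    · exact key_comm _ _ 0 1 hR hp
  exact (Subgroup.mem_centralizer_iff.mp (hle hg) p rfl).symm

lemma centTI_fix {h : Equiv.Perm S} (hh : h ∈ Subgroup.centralizer TIset)
    {Y : S} (hY : h Y = Y) : h = 1 := by
  apply Equiv.ext
  intro W
  obtain ⟨p, hp, hpW⟩ := TIreach Y W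
  have hc := Subgroup.mem_centralizer_iff.mp hh p hp
  calc h W = h (p Y) := by rw [hpW]
    _ = (h * p) Y := rfl
    _ = (p * h) Y := by rw [← hc]
    _ = p (h Y) := rfl
    _ = p Y := by rw [hY]
    _ = W := hpW

lemma centC_fix (hL : hLt L) (hR : hRt R) {h : Equiv.Perm S}
    (hh : h ∈ Subgroup.centralizer ((Subgroup.closure {P, L, R} : Subgroup (Equiv.Perm S)) :
      Set (Equiv.Perm S)))
    {Y : S} (hY : h Y = Y) : h = 1 := by
  apply Equiv.ext
  intro W
  obtain ⟨c, hc, hcW⟩ := Creach (P := P) hL hR Y W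
  have hcm := Subgroup.mem_centralizer_iff.mp hh c (SetLike.mem_coe.mpr hc)
  calc h W = h (c Y) := by rw [hcW]
    _ = (h * c) Y := rfl
    _ = (c * h) Y := by rw [← hcm]
    _ = c (h Y) := rfl
    _ = c Y := by rw [hY]
    _ = W := hcW

end PLR

end Stmt17

/-- Let `P, L, R : S → S` be the contextual inversions
`P(y) = I_{y1+y3}(y)`, `L(y) = I_{y2+y3}(y)`, `R(y) = I_{y1+y2}(y)` on the set `S` of all
transposed and inverted forms of `(0,4,7)`.  Then the subgroup of `Sym(S)` generated by
`P, L, R` and the image of the `T/I`-group in `Sym(S)` are dual groups: both act simply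
transitively on `S` and each is the centralizer of the other. -/
theorem stmt17 (P L R : Equiv.Perm ↥consSet)
    (hP : ∀ Y : ↥consSet, (P Y : Fin 3 → ZMod 12) =
      fun i => -((Y : Fin 3 → ZMod 12) i) + ((Y : Fin 3 → ZMod 12) 0 + (Y : Fin 3 → ZMod 12) 2))
    (hL : ∀ Y : ↥consSet, (L Y : Fin 3 → ZMod 12) =
      fun i => -((Y : Fin 3 → ZMod 12) i) + ((Y : Fin 3 → ZMod 12) 1 + (Y : Fin 3 → ZMod 12) 2))
    (hR : ∀ Y : ↥consSet, (R Y : Fin 3 → ZMod 12) =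
      fun i => -((Y : Fin 3 → ZMod 12) i) + ((Y : Fin 3 → ZMod 12) 0 + (Y : Fin 3 → ZMod 12) 1)) :
    (∀ Y Z : ↥consSet, ∃! p : Equiv.Perm ↥consSet,
        p ∈ Subgroup.closure {P, L, R} ∧ p Y = Z) ∧
    (∀ Y Z : ↥consSet, ∃! p : Equiv.Perm ↥consSet,
        p ∈ {p : Equiv.Perm ↥consSet |
              (∃ j : ZMod 12, ∀ W : ↥consSet,
                (p W : Fin 3 → ZMod 12) = fun i => (W : Fin 3 → ZMod 12) i + j) ∨
              (∃ j : ZMod 12, ∀ W : ↥consSet,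
                (p W : Fin 3 → ZMod 12) = fun i => -((W : Fin 3 → ZMod 12) i) + j)} ∧
          p Y = Z) ∧
    ((Subgroup.centralizer ((Subgroup.closure {P, L, R} : Subgroup (Equiv.Perm ↥consSet)) :
          Set (Equiv.Perm ↥consSet)) : Set (Equiv.Perm ↥consSet))
        = {p : Equiv.Perm ↥consSet |
            (∃ j : ZMod 12, ∀ W : ↥consSet,
              (p W : Fin 3 → ZMod 12) = fun i => (W : Fin 3 → ZMod 12) i + j) ∨
            (∃ j : ZMod 12, ∀ W : ↥consSet,
              (p W : Fin 3 → ZMod 12) = fun i => -((W : Fin 3 → ZMod 12) i) + j)}) ∧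
    ((Subgroup.centralizer {p : Equiv.Perm ↥consSet |
            (∃ j : ZMod 12, ∀ W : ↥consSet,
              (p W : Fin 3 → ZMod 12) = fun i => (W : Fin 3 → ZMod 12) i + j) ∨
            (∃ j : ZMod 12, ∀ W : ↥consSet,
              (p W : Fin 3 → ZMod 12) = fun i => -((W : Fin 3 → ZMod 12) i) + j)} :
          Set (Equiv.Perm ↥consSet))
        = ((Subgroup.closure {P, L, R} : Subgroup (Equiv.Perm ↥consSet)) :
            Set (Equiv.Perm ↥consSet))) := by
  have hP' : Stmt17.hPt P := hP
  have hL' : Stmt17.hLt L := hL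
  have hR' : Stmt17.hRt R := hR
  refine ⟨?_, ?_, ?_, ?_⟩
  · -- PLR group acts simply transitively
    intro Y Z
    obtain ⟨c, hc, hcYZ⟩ := Stmt17.Creach (P := P) hL' hR' Y Z
    refine ⟨c, ⟨hc, hcYZ⟩, ?_⟩
    rintro q ⟨hq, hqYZ⟩
    have hmem := Stmt17.closure_le_centTI hP' hL' hR'
      (Subgroup.mul_mem _ (Subgroup.inv_mem _ hc) hq)
    have hfix : (c⁻¹ * q) Y = Y := by
      rw [Equiv.Perm.mul_apply, hqYZ, ← hcYZ, Equiv.Perm.inv_def, Equiv.symm_apply_apply]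
    exact (inv_mul_eq_one.mp (Stmt17.centTI_fix hmem hfix)).symm
  · -- T/I group acts simply transitively
    intro Y Z
    obtain ⟨p, hp, hpYZ⟩ := Stmt17.TIreach Y Z
    refine ⟨p, ⟨hp, hpYZ⟩, ?_⟩
    rintro q ⟨hq, hqYZ⟩
    have hp' := Stmt17.TI_le_centC hP' hL' hR' hp
    have hq' := Stmt17.TI_le_centC hP' hL' hR' hq
    have hmem := Subgroup.mul_mem _ (Subgroup.inv_mem _ hp') hq'
    have hfix : (p⁻¹ * q) Y = Y := by
      rw [Equiv.Perm.mul_apply, hqYZ, ← hpYZ, Equiv.Perm.inv_def, Equiv.symm_apply_apply]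
    exact (inv_mul_eq_one.mp (Stmt17.centC_fix hL' hR' hmem hfix)).symm
  · -- centralizer of PLR group = T/I group
    ext h
    constructor
    · intro hh
      obtain ⟨p, hp, hpe⟩ := Stmt17.TIreach (Stmt17.Tel 0) (h (Stmt17.Tel 0))
      have hp' := Stmt17.TI_le_centC hP' hL' hR' hp
      have hmem := Subgroup.mul_mem _ (Subgroup.inv_mem _ hp') (SetLike.mem_coe.mp hh)
      have hfix : (p⁻¹ * h) (Stmt17.Tel 0) = Stmt17.Tel 0 := by
        rw [Equiv.Perm.mul_apply, ← hpe, Equiv.Perm.inv_def, Equiv.symm_apply_apply]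
      have heq := inv_mul_eq_one.mp (Stmt17.centC_fix hL' hR' hmem hfix)
      exact heq ▸ hp
    · intro hh
      exact SetLike.mem_coe.mpr (Stmt17.TI_le_centC hP' hL' hR' hh)
  · -- centralizer of T/I group = PLR group
    ext h
    constructor
    · intro hh
      obtain ⟨c, hc, hce⟩ := Stmt17.Creach (P := P) hL' hR' (Stmt17.Tel 0) (h (Stmt17.Tel 0))
      have hc' := Stmt17.closure_le_centTI hP' hL' hR' hc
      have hmem := Subgroup.mul_mem _ (Subgroup.inv_mem _ hc') (SetLike.mem_coe.mp hh)
      have hfix : (c⁻¹ * h) (Stmt17.Tel 0) = Stmt17.Tel 0 := by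
        rw [Equiv.Perm.mul_apply, ← hce, Equiv.Perm.inv_def, Equiv.symm_apply_apply]
      have heq := inv_mul_eq_one.mp (Stmt17.centTI_fix hmem hfix)
      exact SetLike.mem_coe.mpr (heq ▸ hc)
    · intro hh
      exact SetLike.mem_coe.mpr
        (Stmt17.closure_le_centTI hP' hL' hR' (SetLike.mem_coe.mp hh))
end
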